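/- arXiv:1802.03744 — 4 statements merged into one kernel-verified Lean document; each statement's English description precedes it below -/
import Mathlib

section
/- For any clock λ, the object of clocks 𝒞 is isomorphic, as an object of Set^𝕋, to the colimit of the ℕ-indexed diagram n ↦ y({λ}, n), whose connecting morphisms y({λ}, n) → y({λ}, n+1) are the images under the co-Yoneda embedding of the 𝕋-morphisms ({λ}, n+1) → ({λ}, n) given by the identity function on {λ}. -/
open CategoryTheory CategoryTheory.Limits Opposite

/-- A time object: a finite set of clocks together with the number of ticks left on each. -/
structure TimeObj (C : Type) where
  E : Finset C
  d : {x // x ∈ E} → ℕ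

/-- A morphism of time objects. -/
structure TimeHom {C : Type} (A B : TimeObj C) where
  toFun : {x // x ∈ A.E} → {x // x ∈ B.E}
  le : ∀ x, B.d (toFun x) ≤ A.d x

theorem TimeHom.ext' {C : Type} {A B : TimeObj C} {f g : TimeHom A B}
    (h : f.toFun = g.toFun) : f = g := by
  cases f; cases g; cases h; rfl

/-- The category 𝕋 of time objects. -/
instance TimeCat (C : Type) : Category (TimeObj C) where
  Hom := TimeHom
  id _ := ⟨fun x => x, fun _ => le_rfl⟩
  comp f g := ⟨TimeHom.toFun g ∘ TimeHom.toFun f,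
    fun x => le_trans (TimeHom.le g _) (TimeHom.le f _)⟩
  id_comp _ := rfl
  comp_id _ := rfl
  assoc _ _ _ := rfl

/-- The time object `({λ}, n)`. -/
def single (C : Type) (l : C) (n : ℕ) : TimeObj C :=
  ⟨{l}, fun _ => n⟩

/-- The object of clocks 𝒞 in `Set^𝕋`. -/
def Clocks (C : Type) : TimeObj C ⥤ Type where
  obj A := {x // x ∈ A.E}
  map f := TypeCat.ofHom (TimeHom.toFun f)
  map_id _ := rfl
  map_comp _ _ := rfl

/-- The 𝕋-morphism `({λ}, n+1) ⟶ ({λ}, n)` given by the identity function on `{λ}`. -/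
def stepHom (C : Type) (l : C) (n : ℕ) : single C l (n + 1) ⟶ single C l n :=
  ⟨fun x => x, fun _ => Nat.le_succ n⟩

/-- The ℕ-indexed diagram `n ↦ y({λ}, n)` whose connecting maps are the images under
the co-Yoneda embedding of the morphisms `({λ}, n+1) ⟶ ({λ}, n)` given by the
identity function on `{λ}`. -/
noncomputable def clockDiagram (C : Type) (l : C) : ℕ ⥤ (TimeObj C ⥤ Type) :=
  CategoryTheory.Functor.ofSequence
    (fun n => coyoneda.map (Quiver.Hom.op (stepHom C l n)))

section Aux

variable {C : Type} (l : C)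

lemma lmem (l : C) : l ∈ ({l} : Finset C) := Finset.mem_singleton_self l

/-- Hom extensionality out of a singleton time object. -/
lemma single_hom_ext {A : TimeObj C} {n : ℕ} {f g : single C l n ⟶ A}
    (h : f.toFun ⟨l, lmem l⟩ = g.toFun ⟨l, lmem l⟩) : f = g := by
  apply TimeHom.ext'
  funext x
  obtain ⟨x, hx⟩ := x
  obtain rfl : x = l := Finset.mem_singleton.mp hx
  exact h

/-- The element of `y({λ},n)(A)` picking out `x` with `A.d x ≤ n`. -/
def elt {A : TimeObj C} (x : {x // x ∈ A.E}) (n : ℕ) (h : A.d x ≤ n) :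
    single C l n ⟶ A :=
  ⟨fun _ => x, fun _ => h⟩

lemma clockDiagram_obj (n : ℕ) :
    (clockDiagram C l).obj n = coyoneda.obj (op (single C l n)) := rfl

lemma clockDiagram_map_toFun {n m : ℕ} (h : n ≤ m) (A : TimeObj C)
    (f : single C l n ⟶ A) :
    (((clockDiagram C l).map (homOfLE h)).app A f).toFun
      = f.toFun := by
  induction m with
  | zero =>
    obtain rfl : n = 0 := Nat.le_zero.mp h
    have : homOfLE h = 𝟙 (0 : ℕ) := rfl
    rw [this, CategoryTheory.Functor.map_id]
    rfl
  | succ m ih =>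
    rcases Nat.lt_or_ge n (m+1) with hlt | hge
    · have hnm : n ≤ m := Nat.lt_succ_iff.mp hlt
      have : homOfLE h = homOfLE hnm ≫ homOfLE (Nat.le_succ m) := rfl
      rw [this, CategoryTheory.Functor.map_comp]
      have hstep : (clockDiagram C l).map (homOfLE (Nat.le_succ m))
          = coyoneda.map (Quiver.Hom.op (stepHom C l m)) :=
        CategoryTheory.Functor.ofSequence_map_homOfLE_succ _ m
      change (((clockDiagram C l).map (homOfLE (Nat.le_succ m))).app A
          (((clockDiagram C l).map (homOfLE hnm)).app A f)).toFun = _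
      rw [hstep]
      have := ih hnm
      change (stepHom C l m ≫ ((clockDiagram C l).map (homOfLE hnm)).app A f).toFun = _
      change (((clockDiagram C l).map (homOfLE hnm)).app A f).toFun ∘ (fun x => x) = _
      funext x
      simp only [Function.comp]
      rw [this]
    · obtain rfl : n = m + 1 := le_antisymm h hge
      have : homOfLE h = 𝟙 (m+1 : ℕ) := rfl
      rw [this, CategoryTheory.Functor.map_id]
      rfl

/-- The cocone on `clockDiagram` with apex `Clocks C`. -/
noncomputable def clockCocone : Cocone (clockDiagram C l) where
  pt := Clocks C
  ι := NatTrans.ofSequence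
    (F := clockDiagram C l) (G := (Functor.const ℕ).obj (Clocks C))
    (fun n =>
      { app := fun A => TypeCat.ofHom (fun f => f.toFun ⟨l, lmem l⟩)
        naturality := fun A B g => rfl })
    (by
      intro n
      ext A f
      change ((((clockDiagram C l).map (homOfLE (n.le_add_right 1))).app A f)).toFun
        ⟨l, lmem l⟩ = _
      exact congrFun (clockDiagram_map_toFun l (n.le_add_right 1) A f) ⟨l, lmem l⟩)

lemma clockCocone_ι_app (n : ℕ) (A : TimeObj C) (f : single C l n ⟶ A) :
    ((clockCocone l).ι.app n).app A f = f.toFun ⟨l, lmem l⟩ := rfl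

/-- The cocone `clockCocone` is a colimit. -/
noncomputable def clockCoconeIsColimit : IsColimit (clockCocone l) where
  desc s :=
    { app := fun A => TypeCat.ofHom (fun x => (s.ι.app (A.d x)).app A (elt l x (A.d x) le_rfl))
      naturality := by
        intro A B g
        ext x
        -- LHS : (s.ι.app (B.d (g.toFun x))).app B (elt _ _)
        -- RHS : s.pt.map g ((s.ι.app (A.d x)).app A (elt _ _))
        change (s.ι.app (B.d (g.toFun x))).app B (elt l (g.toFun x) _ le_rfl)
          = s.pt.map g ((s.ι.app (A.d x)).app A (elt l x (A.d x) le_rfl))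
        have hnat := types_congr_hom ((s.ι.app (A.d x)).naturality g)
          (elt l x (A.d x) le_rfl)
        dsimp at hnat
        refine Eq.trans ?_ hnat
        -- now both sides are values of s.ι.app at B, at elements of different indices
        have hle : B.d (g.toFun x) ≤ A.d x := TimeHom.le g x
        have hcomm := types_congr_hom (congrFun (congrArg NatTrans.app
          (s.ι.naturality (homOfLE hle))) B)
          (elt l (g.toFun x) (B.d (g.toFun x)) le_rfl)
        dsimp at hcomm
        refine Eq.trans hcomm.symm ?_
        refine congrArg (fun y => (s.ι.app (A.d x)).app B y) (single_hom_ext l ?_)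
        exact congrFun (clockDiagram_map_toFun l hle B _) ⟨l, lmem l⟩ }
  fac := by
    intro s n
    ext A f
    change (s.ι.app (A.d (f.toFun ⟨l, lmem l⟩))).app A
      (elt l (f.toFun ⟨l, lmem l⟩) (A.d (f.toFun ⟨l, lmem l⟩)) le_rfl) = (s.ι.app n).app A f
    have hle : A.d (f.toFun ⟨l, lmem l⟩) ≤ n := TimeHom.le f ⟨l, lmem l⟩
    have hcomm := types_congr_hom (congrFun (congrArg NatTrans.app
      (s.ι.naturality (homOfLE hle))) A)
      (elt l (f.toFun ⟨l, lmem l⟩) _ le_rfl)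
    dsimp at hcomm
    refine Eq.trans hcomm.symm ?_
    refine congrArg (fun y => (s.ι.app n).app A y) (single_hom_ext l ?_)
    exact congrFun (clockDiagram_map_toFun l hle A _) ⟨l, lmem l⟩
  uniq := by
    intro s m hm
    ext A x
    have := types_congr_hom (congrFun (congrArg NatTrans.app (hm (A.d x))) A)
      (elt l x (A.d x) le_rfl)
    dsimp at this
    exact this

end Aux

/-- The object of clocks `𝒞` is isomorphic to the colimit of the diagram
`n ↦ y({λ}, n)`. -/
theorem statement_1 (C : Type) [Countable C] [Infinite C] (l : C) :
    Nonempty (Limits.colimit (clockDiagram C l) ≅ Clocks C) := by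
  exact ⟨colimit.isoColimitCocone ⟨clockCocone l, clockCoconeIsColimit l⟩⟩
end

section
/- Let A be an object of Set^𝕋, λ a clock and n ∈ ℕ. For every time object (ℰ, δ) and every clock λ* ∉ ℰ, there is a bijection between the value of the exponential presheaf A^{y({λ}, n)} at (ℰ, δ) and the set A(ℰ ∪ {λ*}, δ[λ* ↦ n]); moreover, under this bijection the component at (ℰ, δ) of the canonical morphism c_A : A → A^{y({λ}, n)} (the exponential transpose of the projection A × y({λ}, n) → A) is equal to the map A(ι), where ι : (ℰ, δ) → (ℰ ∪ {λ*}, δ[λ* ↦ n]) is the inclusion. -/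
open CategoryTheory CategoryTheory.Limits Opposite

open MonoidalCategory

/-- In a category with (chosen) finite products, a morphism `p : A ⟶ B` is
*orthogonal* to an object `X` if every commuting square whose left edge is a
projection `Y ⊗ X ⟶ Y` and whose right edge is `p` has a unique diagonal filler. -/
def OrthogonalTo {𝒞 : Type u} [Category.{v} 𝒞] [CartesianMonoidalCategory 𝒞]
    {A B : 𝒞} (p : A ⟶ B) (X : 𝒞) : Prop :=
  ∀ (Y : 𝒞) (f : Y ⊗ X ⟶ A) (g : Y ⟶ B),
    f ≫ p = SemiCartesianMonoidalCategory.fst Y X ≫ g →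
      ∃! h : Y ⟶ A, SemiCartesianMonoidalCategory.fst Y X ≫ h = f ∧ h ≫ p = g

/-- A morphism of presheaves on 𝕋 is invariant under clock introduction if it is
orthogonal to every representable `y({λ}, n)`. -/
def InvariantUnderClockIntro {C : Type} {A B : TimeObj C ⥤ Type} (p : A ⟶ B) : Prop :=
  ∀ (l : C) (n : ℕ), OrthogonalTo p (coyoneda.obj (op (single C l n)))

/-- The time object `(ℰ ∪ {λ}, δ[λ ↦ n])`. -/
def TimeObj.extend {C : Type} [DecidableEq C] (A : TimeObj C) (l : C) (n : ℕ) :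
    TimeObj C where
  E := insert l A.E
  d x := if h : x.1 ∈ A.E then A.d ⟨x.1, h⟩ else n

/-- The inclusion `(ℰ, δ) ⟶ (ℰ ∪ {λ}, δ[λ ↦ n])`. -/
def inclExtend {C : Type} [DecidableEq C] (A : TimeObj C) (l : C) (n : ℕ) :
    A ⟶ A.extend l n :=
  ⟨fun x => ⟨x.1, Finset.mem_insert_of_mem x.2⟩, fun x => by
    dsimp [TimeObj.extend]
    rw [if_pos x.2]⟩

section Aux

variable {C : Type} [DecidableEq C]

/-- The map `({λ}, n) ⟶ (ℰ ∪ {λ*}, δ[λ* ↦ n])` sending `λ` to `λ*`. -/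
def singleToExtend (Eδ : TimeObj C) (l : C) (n : ℕ) (l' : C) (hl' : l' ∉ Eδ.E) :
    single C l n ⟶ Eδ.extend l' n :=
  ⟨fun _ => ⟨l', Finset.mem_insert_self _ _⟩, fun _ => by
    dsimp [TimeObj.extend, single]
    rw [dif_neg hl']⟩

/-- Glue a map out of `({λ}, n)` and a map out of `(ℰ, δ)` to a map out of
`(ℰ ∪ {λ*}, δ[λ* ↦ n])`. -/
def glue {Eδ X : TimeObj C} {l : C} {n : ℕ} {l' : C} (hl' : l' ∉ Eδ.E)
    (s : single C l n ⟶ X) (k : Eδ ⟶ X) : Eδ.extend l' n ⟶ X where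
  toFun x :=
    if h : x.1 ∈ Eδ.E then k.toFun ⟨x.1, h⟩ else s.toFun ⟨l, Finset.mem_singleton_self l⟩
  le x := by
    dsimp [TimeObj.extend]
    by_cases h : x.1 ∈ Eδ.E
    · rw [dif_pos h, dif_pos h]; exact TimeHom.le k _
    · rw [dif_neg h, dif_neg h]; exact TimeHom.le s _

/-- The canonical natural transformation
`y(ℰ ∪ {λ*}, δ[λ* ↦ n]) ⟶ y({λ}, n) ⊗ y(ℰ, δ)`. -/
def extendHom (Eδ : TimeObj C) (l : C) (n : ℕ) (l' : C) (hl' : l' ∉ Eδ.E) :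
    coyoneda.obj (op (Eδ.extend l' n)) ⟶
      coyoneda.obj (op (single C l n)) ⊗ coyoneda.obj (op Eδ) where
  app X := TypeCat.ofHom fun h => (singleToExtend Eδ l n l' hl' ≫ h, inclExtend Eδ l' n ≫ h)
  naturality X X' f := by
    ext h
    dsimp
    rfl

/-- The inverse natural transformation
`y({λ}, n) ⊗ y(ℰ, δ) ⟶ y(ℰ ∪ {λ*}, δ[λ* ↦ n])`. -/
def extendInv (Eδ : TimeObj C) (l : C) (n : ℕ) (l' : C) (hl' : l' ∉ Eδ.E) :
    coyoneda.obj (op (single C l n)) ⊗ coyoneda.obj (op Eδ) ⟶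
      coyoneda.obj (op (Eδ.extend l' n)) where
  app X := TypeCat.ofHom fun (p : (single C l n ⟶ X) × (Eδ ⟶ X)) => glue hl' p.1 p.2
  naturality X X' f := by
    ext p
    apply TimeHom.ext'
    funext x
    show (glue hl' (p.1 ≫ f) (p.2 ≫ f)).toFun x = f.toFun ((glue hl' p.1 p.2).toFun x)
    dsimp [glue]
    split <;> rfl

/-- `y(ℰ ∪ {λ*}, δ[λ* ↦ n]) ≅ y({λ}, n) ⊗ y(ℰ, δ)`. -/
def extendIso (Eδ : TimeObj C) (l : C) (n : ℕ) (l' : C) (hl' : l' ∉ Eδ.E) :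
    coyoneda.obj (op (Eδ.extend l' n)) ≅
      coyoneda.obj (op (single C l n)) ⊗ coyoneda.obj (op Eδ) where
  hom := extendHom Eδ l n l' hl'
  inv := extendInv Eδ l n l' hl'
  hom_inv_id := by
    ext X h
    apply TimeHom.ext'
    funext x
    show (glue hl' (singleToExtend Eδ l n l' hl' ≫ h) (inclExtend Eδ l' n ≫ h)).toFun x
      = h.toFun x
    dsimp [glue, singleToExtend, inclExtend]
    split
    · rename_i hx
      show h.toFun ⟨x.1, Finset.mem_insert_of_mem hx⟩ = h.toFun x
      congr 1
    · rename_i hx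
      show h.toFun ⟨l', Finset.mem_insert_self _ _⟩ = h.toFun x
      congr 1
      have : x.1 = l' := by
        rcases Finset.mem_insert.1 x.2 with h1 | h1
        · exact h1
        · exact absurd h1 hx
      exact Subtype.ext this.symm
  inv_hom_id := by
    apply NatTrans.ext
    funext X
    refine ConcreteCategory.hom_ext _ _ fun p => ?_
    show (singleToExtend Eδ l n l' hl' ≫ glue hl' p.1 p.2,
      inclExtend Eδ l' n ≫ glue hl' p.1 p.2) = p
    obtain ⟨s, k⟩ := p
    refine Prod.ext ?_ ?_
    · apply TimeHom.ext'
      funext y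
      show (glue hl' s k).toFun ⟨l', Finset.mem_insert_self _ _⟩ = s.toFun y
      dsimp [glue]
      rw [dif_neg hl']
      congr 1
      exact Subtype.ext (Finset.mem_singleton.1 y.2).symm
    · apply TimeHom.ext'
      funext x
      show (glue hl' s k).toFun ⟨x.1, Finset.mem_insert_of_mem x.2⟩ = k.toFun x
      dsimp [glue]
      rw [if_pos x.2]

theorem coyonedaEquiv_symm_naturality {D : Type} [SmallCategory D] {F G : D ⥤ Type}
    (N : F ⟶ G) {X : D} (a : F.obj X) :
    coyonedaEquiv.symm (N.app X a) = coyonedaEquiv.symm a ≫ N := by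
  ext Y f
  show (coyonedaEquiv.symm (N.app X a)).app Y f
    = N.app Y ((coyonedaEquiv.symm a).app Y f)
  rw [coyonedaEquiv_symm_app_apply, coyonedaEquiv_symm_app_apply,
    FunctorToTypes.naturality]

end Aux

/-- For any presheaf `A` on 𝕋, a clock `λ` and `n : ℕ`, the value of the exponential
`A^{y({λ}, n)}` at `(ℰ, δ)` is in bijection with `A(ℰ ∪ {λ*}, δ[λ* ↦ n])` for any
`λ* ∉ ℰ`, and under this bijection the component at `(ℰ, δ)` of the canonical map
`c_A : A ⟶ A^{y({λ}, n)}` (the exponential transpose of the projection) is the map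
`A(ι)` induced by the inclusion `ι : (ℰ, δ) ⟶ (ℰ ∪ {λ*}, δ[λ* ↦ n])`. -/
theorem statement_5 (C : Type) [Countable C] [Infinite C] [DecidableEq C]
    (A : TimeObj C ⥤ Type) (l : C) (n : ℕ) (Eδ : TimeObj C) (l' : C)
    (hl' : l' ∉ Eδ.E) :
    ∃ e : ((ihom (coyoneda.obj (op (single C l n)))).obj A).obj Eδ ≃
        A.obj (Eδ.extend l' n),
      ∀ a : A.obj Eδ,
        e (((MonoidalClosed.curry
            (SemiCartesianMonoidalCategory.snd (coyoneda.obj (op (single C l n))) A)).app Eδ) a)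
          = A.map (inclExtend Eδ l' n) a := by
  set S := coyoneda.obj (op (single C l n)) with hS
  set Y := coyoneda.obj (op Eδ) with hY
  refine ⟨(coyonedaEquiv.symm.trans
      ((((ihom.adjunction S).homEquiv Y A).symm.trans
        ((extendIso Eδ l n l' hl').symm.homCongr (Iso.refl A))).trans coyonedaEquiv)),
    fun a => ?_⟩
  simp only [Equiv.trans_apply]
  rw [coyonedaEquiv_symm_naturality]
  rw [MonoidalClosed.homEquiv_symm_apply_eq, MonoidalClosed.uncurry_natural_left,
    MonoidalClosed.uncurry_curry]
  simp only [Iso.homCongr, Equiv.coe_fn_mk, Iso.symm_inv, Iso.refl_hom, Category.comp_id]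
  have h1 : (extendIso Eδ l n l' hl').hom ≫
      (S ◁ coyonedaEquiv.symm a ≫ SemiCartesianMonoidalCategory.snd S A)
      = coyoneda.map (inclExtend Eδ l' n).op ≫ coyonedaEquiv.symm a := by
    rw [CartesianMonoidalCategory.whiskerLeft_snd, ← Category.assoc]
    rfl
  rw [h1, coyonedaEquiv_comp, coyonedaEquiv_coyoneda_map, coyonedaEquiv_symm_app_apply]
end

section
/- Let Δ be a finite set of clocks. The full subcategory of the slice category Set^𝕋/𝒞^Δ spanned by those objects whose structure morphism into 𝒞^Δ is invariant under clock introduction is equivalent to GR(Δ), the category of presheaves on the poset P(Δ). -/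
open CategoryTheory CategoryTheory.Limits Opposite

open MonoidalCategory

/-- The `Δ`-fold power `𝒞^Δ` of the object of clocks. -/
def ClocksPow (C : Type) (Δ : Finset C) : TimeObj C ⥤ Type where
  obj A := {k // k ∈ Δ} → {x // x ∈ A.E}
  map f := TypeCat.ofHom (fun g => TimeHom.toFun f ∘ g)
  map_id _ := rfl
  map_comp _ _ := rfl

/-- An element of the poset `P(Δ)`: an equivalence relation `E` on `Δ` together
with a function `d : Δ → ℕ` respecting `E`. -/
structure PObj (C : Type) (Δ : Finset C) where
  E : Setoid {k // k ∈ Δ}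
  d : {k // k ∈ Δ} → ℕ
  resp : ∀ a b, E.r a b → d a = d b

/-- The order on `P(Δ)`: `(E, d) ≤ (E', d')` iff `E' ⊆ E` (as subsets of `Δ × Δ`)
and `d ≤ d'` pointwise. -/
instance PObj.instPreorder (C : Type) (Δ : Finset C) : Preorder (PObj C Δ) where
  le x y := (∀ a b, y.E.r a b → x.E.r a b) ∧ ∀ k, x.d k ≤ y.d k
  le_refl _ := ⟨fun _ _ h => h, fun _ => le_rfl⟩
  le_trans _ _ _ h₁ h₂ :=
    ⟨fun a b h => h₁.1 a b (h₂.1 a b h), fun k => (h₁.2 k).trans (h₂.2 k)⟩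


open CategoryTheory CategoryTheory.Limits Opposite MonoidalCategory

noncomputable section
namespace Pf
variable {C : Type} {Δ : Finset C}

/-- kernel of a map as a setoid -/
def ker {B : TimeObj C} (ρ : {k // k ∈ Δ} → {x // x ∈ B.E}) : Setoid {k // k ∈ Δ} :=
  ⟨fun a b => ρ a = ρ b, ⟨fun _ => rfl, Eq.symm, Eq.trans⟩⟩

def pobj (B : TimeObj C) (ρ : {k // k ∈ Δ} → {x // x ∈ B.E}) : PObj C Δ :=
  ⟨ker ρ, fun a => B.d (ρ a), fun a b h => by
    show B.d (ρ a) = B.d (ρ b)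
    change ρ a = ρ b at h; rw [h]⟩

def res (Y : (PObj C Δ)ᵒᵖ ⥤ Type) {u v : PObj C Δ} (h : u ≤ v) :
    Y.obj (op v) → Y.obj (op u) := Y.map (homOfLE h).op

@[simp] lemma res_res (Y : (PObj C Δ)ᵒᵖ ⥤ Type) {u v w : PObj C Δ} (h : u ≤ v) (h' : v ≤ w)
    (y : Y.obj (op w)) : res Y h (res Y h' y) = res Y (h.trans h') y := by
  dsimp [res]
  rw [← types_comp_apply (Y.map _) (Y.map _), ← Y.map_comp]
  congr 1

@[simp] lemma res_self (Y : (PObj C Δ)ᵒᵖ ⥤ Type) {u : PObj C Δ} (h : u ≤ u)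
    (y : Y.obj (op u)) : res Y h y = y := by
  dsimp [res]
  have e : (homOfLE h).op = 𝟙 (op u) := Subsingleton.elim _ _
  exact e ▸ types_congr_hom (Y.map_id (op u)) y

lemma res_natural {Y Y' : (PObj C Δ)ᵒᵖ ⥤ Type} (β : Y ⟶ Y') {u v : PObj C Δ} (h : u ≤ v)
    (y : Y.obj (op v)) : β.app (op u) (res Y h y) = res Y' h (β.app (op v) y) :=
  types_congr_hom (β.naturality (homOfLE h).op) y

lemma pobj_comp_le {B B' : TimeObj C} (σ : B ⟶ B') (ρ : {k // k ∈ Δ} → {x // x ∈ B.E}) :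
    pobj B' (σ.toFun ∘ ρ) ≤ pobj B ρ :=
  ⟨fun a b h => congrArg σ.toFun h, fun a => TimeHom.le σ _⟩

lemma pobj_comp_ge {B B' : TimeObj C} (σ : B ⟶ B') (hinj : Function.Injective σ.toFun)
    (hd : ∀ x, B'.d (σ.toFun x) = B.d x) (ρ : {k // k ∈ Δ} → {x // x ∈ B.E}) :
    pobj B ρ ≤ pobj B' (σ.toFun ∘ ρ) :=
  ⟨fun a b h => hinj h, fun a => (hd _).ge⟩

/-- The underlying presheaf on 𝕋 of `G Y`. -/
def Gobj (Y : (PObj C Δ)ᵒᵖ ⥤ Type) : TimeObj C ⥤ Type where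
  obj B := Σ ρ : ({k // k ∈ Δ} → {x // x ∈ B.E}), Y.obj (op (pobj B ρ))
  map σ := TypeCat.ofHom fun s => ⟨σ.toFun ∘ s.1, res Y (pobj_comp_le σ s.1) s.2⟩
  map_id B := by
    refine ConcreteCategory.hom_ext _ _ fun s => ?_; obtain ⟨ρ, y⟩ := s
    exact congrArg (Sigma.mk ρ) (res_self Y _ y)
  map_comp σ τ := by
    refine ConcreteCategory.hom_ext _ _ fun s => ?_; obtain ⟨ρ, y⟩ := s
    exact congrArg (Sigma.mk _) ((res_res Y _ _ y).symm)

def pG (Y : (PObj C Δ)ᵒᵖ ⥤ Type) : Gobj Y ⟶ ClocksPow C Δ where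
  app B := TypeCat.ofHom fun s => s.1
  naturality _ _ _ := rfl

end Pf
open CategoryTheory CategoryTheory.Limits Opposite MonoidalCategory

noncomputable section
namespace Pf2
variable {C : Type} [DecidableEq C]

def jmap {B₀ : TimeObj C} {l l' : C} {n : ℕ} (h : l' ∉ B₀.E) :
    single C l n ⟶ B₀.extend l' n :=
  ⟨fun _ => ⟨l', Finset.mem_insert_self _ _⟩, fun x => by
    dsimp [TimeObj.extend, single]; rw [dif_neg h]⟩

def combine {B₀ B : TimeObj C} {l l' : C} {n : ℕ} (u : B₀ ⟶ B) (w : single C l n ⟶ B) :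
    B₀.extend l' n ⟶ B :=
  ⟨fun x => if h : x.1 ∈ B₀.E then u.toFun ⟨x.1, h⟩ else w.toFun ⟨l, Finset.mem_singleton_self l⟩,
   fun x => by
     dsimp [TimeObj.extend]
     by_cases h : x.1 ∈ B₀.E
     · rw [dif_pos h, dif_pos h]; exact TimeHom.le u _
     · rw [dif_neg h, dif_neg h]; exact TimeHom.le w _⟩

lemma incl_combine {B₀ B : TimeObj C} {l l' : C} {n : ℕ} (u : B₀ ⟶ B)
    (w : single C l n ⟶ B) : inclExtend B₀ l' n ≫ combine u w = u :=
  TimeHom.ext' (funext fun x => dif_pos x.2)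

lemma jmap_combine {B₀ B : TimeObj C} {l l' : C} {n : ℕ} (h : l' ∉ B₀.E) (u : B₀ ⟶ B)
    (w : single C l n ⟶ B) : jmap h ≫ combine u w = w :=
  TimeHom.ext' (funext fun x => by
    obtain ⟨x, hx⟩ := x
    obtain rfl : x = l := Finset.mem_singleton.mp hx
    exact dif_neg h)

lemma combine_incl_jmap {B₀ : TimeObj C} {l' : C} {n : ℕ} (h : l' ∉ B₀.E) :
    combine (l := l') (inclExtend B₀ l' n) (jmap h) = 𝟙 (B₀.extend l' n) :=
  TimeHom.ext' (funext fun x => by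
    by_cases hx : x.1 ∈ B₀.E
    · exact (dif_pos hx).trans rfl
    · have hxl : x.1 = l' := by
        rcases Finset.mem_insert.mp x.2 with h1 | h1
        · exact h1
        · exact absurd h1 hx
      exact (dif_neg hx).trans (Subtype.ext hxl.symm))

lemma combine_comp {B₀ B B₂ : TimeObj C} {l l' : C} {n : ℕ} (u : B₀ ⟶ B)
    (w : single C l n ⟶ B) (τ : B ⟶ B₂) :
    (combine (l' := l') u w) ≫ τ = combine (u ≫ τ) (w ≫ τ) :=
  TimeHom.ext' (funext fun x => by
    show τ.toFun (dite _ _ _) = dite _ _ _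
    by_cases hx : x.1 ∈ B₀.E
    · rw [dif_pos hx, dif_pos hx]; rfl
    · rw [dif_neg hx, dif_neg hx]; rfl)

variable {Δ : Finset C} {X : TimeObj C ⥤ Type} {p : X ⟶ ClocksPow C Δ}

/-- The natural transformation `y(B₀) ⟶ X` corresponding to `x₀ ∈ X(B₀)`. -/
def yhom (B₀ : TimeObj C) (x₀ : X.obj B₀) : coyoneda.obj (op B₀) ⟶ X where
  app B := TypeCat.ofHom fun u => X.map u x₀
  naturality B B₂ τ := by refine ConcreteCategory.hom_ext _ _ fun u => ?_; exact types_congr_hom (X.map_comp u τ) x₀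

/-- The map `y(B₀) ⊗ y({l},n) ⟶ X` induced by `xh ∈ X(B₀.extend l n)`. -/
def fhom {B₀ : TimeObj C} {l : C} {n : ℕ} (xh : X.obj (B₀.extend l n)) :
    coyoneda.obj (op B₀) ⊗ coyoneda.obj (op (single C l n)) ⟶ X where
  app B := TypeCat.ofHom fun q => X.map (combine q.1 q.2) xh
  naturality B B₂ τ := by
    refine ConcreteCategory.hom_ext _ _ fun q => ?_
    show X.map (combine (q.1 ≫ τ) (q.2 ≫ τ)) xh = X.map τ (X.map (combine q.1 q.2) xh)
    rw [← combine_comp, X.map_comp]; rfl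

def ghom (B₀ : TimeObj C) (r : (ClocksPow C Δ).obj B₀) : coyoneda.obj (op B₀) ⟶ ClocksPow C Δ where
  app B := TypeCat.ofHom fun u => u.toFun ∘ r
  naturality _ _ _ := rfl

lemma square {B₀ : TimeObj C} {l : C} (hl : l ∉ B₀.E) {n : ℕ}
    (r : (ClocksPow C Δ).obj B₀) (xh : X.obj (B₀.extend l n))
    (hxh : p.app _ xh = (inclExtend B₀ l n).toFun ∘ r) :
    fhom xh ≫ p = SemiCartesianMonoidalCategory.fst _ _ ≫ ghom B₀ r := by
  apply NatTrans.ext; funext B; refine ConcreteCategory.hom_ext _ _ fun q => ?_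
  show p.app B (X.map (combine q.1 q.2) xh) = q.1.toFun ∘ r
  have := types_congr_hom (p.naturality (combine (l' := l) q.1 q.2)) xh
  rw [types_comp_apply, types_comp_apply] at this
  rw [this, hxh]
  funext a
  exact congrFun (congrArg TimeHom.toFun (incl_combine q.1 q.2)) (r a)

lemma key_surj (hp : InvariantUnderClockIntro p) {B₀ : TimeObj C} {l : C} (hl : l ∉ B₀.E)
    (n : ℕ) (r : (ClocksPow C Δ).obj B₀) (xh : X.obj (B₀.extend l n))
    (hxh : p.app _ xh = (inclExtend B₀ l n).toFun ∘ r) :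
    ∃ x₀ : X.obj B₀, p.app _ x₀ = r ∧ X.map (inclExtend B₀ l n) x₀ = xh := by
  obtain ⟨h, ⟨hf, hg⟩, -⟩ := hp l n (coyoneda.obj (op B₀)) (fhom xh) (ghom B₀ r) (square hl r xh hxh)
  refine ⟨h.app B₀ (𝟙 B₀), ?_, ?_⟩
  · exact types_congr_hom (congrFun (congrArg NatTrans.app hg) B₀) (𝟙 B₀)
  · have hnat : h.app (B₀.extend l n) (𝟙 B₀ ≫ inclExtend B₀ l n)
        = X.map (inclExtend B₀ l n) (h.app B₀ (𝟙 B₀)) :=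
      types_congr_hom (h.naturality (inclExtend B₀ l n)) (𝟙 B₀)
    rw [Category.id_comp] at hnat
    have hf' : h.app (B₀.extend l n) (inclExtend B₀ l n)
        = X.map (combine (inclExtend B₀ l n) (jmap hl)) xh :=
      types_congr_hom (congrFun (congrArg NatTrans.app hf) (B₀.extend l n)) (inclExtend B₀ l n, jmap hl)
    rw [combine_incl_jmap hl, X.map_id] at hf'
    rw [← hnat, hf']; rfl

lemma key_inj (hp : InvariantUnderClockIntro p) {B₀ : TimeObj C} {l : C} (hl : l ∉ B₀.E)
    (n : ℕ) (r : (ClocksPow C Δ).obj B₀) (x₀ x₀' : X.obj B₀)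
    (h₀ : p.app _ x₀ = r) (h₀' : p.app _ x₀' = r)
    (he : X.map (inclExtend B₀ l n) x₀ = X.map (inclExtend B₀ l n) x₀') : x₀ = x₀' := by
  set xh := X.map (inclExtend B₀ l n) x₀ with hxhdef
  have hxh : p.app _ xh = (inclExtend B₀ l n).toFun ∘ r := by
    have := types_congr_hom (p.naturality (inclExtend B₀ l n)) x₀
    rw [types_comp_apply, types_comp_apply] at this
    rw [hxhdef, this, h₀]; rfl
  obtain ⟨h, -, huniq⟩ := hp l n (coyoneda.obj (op B₀)) (fhom xh) (ghom B₀ r) (square hl r xh hxh)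
  have cond : ∀ (x : X.obj B₀), p.app _ x = r → X.map (inclExtend B₀ l n) x = xh →
      (SemiCartesianMonoidalCategory.fst _ _ ≫ yhom B₀ x = fhom xh ∧ yhom B₀ x ≫ p = ghom B₀ r) := by
    intro x hx hxx
    constructor
    · apply NatTrans.ext; funext B; refine ConcreteCategory.hom_ext _ _ fun q => ?_
      show X.map q.1 x = X.map (combine q.1 q.2) xh
      rw [← hxx, ← types_comp_apply (X.map _) (X.map _), ← X.map_comp, incl_combine]
    · apply NatTrans.ext; funext B; refine ConcreteCategory.hom_ext _ _ fun u => ?_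
      show p.app B (X.map u x) = u.toFun ∘ r
      have := types_congr_hom (p.naturality u) x
      rw [types_comp_apply, types_comp_apply] at this
      rw [this, hx]; rfl
  have e1 := huniq (yhom B₀ x₀) (cond x₀ h₀ rfl)
  have e2 := huniq (yhom B₀ x₀') (cond x₀' h₀' he.symm)
  have := e1.trans e2.symm
  have h3 : X.map (𝟙 B₀) x₀ = X.map (𝟙 B₀) x₀' :=
    types_congr_hom (congrFun (congrArg NatTrans.app this) B₀) (𝟙 B₀)
  simpa using h3

end Pf2
open CategoryTheory CategoryTheory.Limits Opposite MonoidalCategory Pf Pf2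

noncomputable section
namespace Pf3
variable {C : Type} [DecidableEq C] {Δ : Finset C} {X : TimeObj C ⥤ Type} {p : X ⟶ ClocksPow C Δ}

/-- Inverse of a bijective δ-preserving time morphism. -/
def timeInv {A B : TimeObj C} (σ : A ⟶ B) (hbij : Function.Bijective σ.toFun)
    (hd : ∀ x, B.d (σ.toFun x) = A.d x) : B ⟶ A :=
  ⟨(Equiv.ofBijective σ.toFun hbij).symm, fun y => by
    have h1 : σ.toFun ((Equiv.ofBijective σ.toFun hbij).symm y) = y :=
      (Equiv.ofBijective σ.toFun hbij).apply_symm_apply y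
    have := hd ((Equiv.ofBijective σ.toFun hbij).symm y)
    rw [h1] at this
    exact this.ge⟩

lemma timeInv_comp {A B : TimeObj C} (σ : A ⟶ B) (hbij) (hd) :
    timeInv σ hbij hd ≫ σ = 𝟙 B :=
  TimeHom.ext' (funext fun y => (Equiv.ofBijective σ.toFun hbij).apply_symm_apply y)

lemma comp_timeInv {A B : TimeObj C} (σ : A ⟶ B) (hbij) (hd) :
    σ ≫ timeInv σ hbij hd = 𝟙 A :=
  TimeHom.ext' (funext fun x => (Equiv.ofBijective σ.toFun hbij).symm_apply_apply x)

lemma iso_surj {A B : TimeObj C} (σ : A ⟶ B) (hbij : Function.Bijective σ.toFun)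
    (hd : ∀ x, B.d (σ.toFun x) = A.d x) (r : (ClocksPow C Δ).obj A) (y : X.obj B)
    (hy : p.app _ y = σ.toFun ∘ r) : ∃ x, p.app _ x = r ∧ X.map σ x = y := by
  refine ⟨X.map (timeInv σ hbij hd) y, ?_, ?_⟩
  · have := types_congr_hom (p.naturality (timeInv σ hbij hd)) y
    rw [types_comp_apply, types_comp_apply] at this
    rw [this, hy]
    funext a
    exact (Equiv.ofBijective σ.toFun hbij).symm_apply_apply (r a)
  · rw [← types_comp_apply (X.map _) (X.map _), ← X.map_comp, timeInv_comp, X.map_id]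
    rfl

lemma iso_inj {A B : TimeObj C} (σ : A ⟶ B) (hbij : Function.Bijective σ.toFun)
    (hd : ∀ x, B.d (σ.toFun x) = A.d x) : Function.Injective (X.map σ) := by
  intro x x' h
  have : X.map (σ ≫ timeInv σ hbij hd) x = X.map (σ ≫ timeInv σ hbij hd) x' := by
    rw [X.map_comp]; exact congrArg (X.map _) h
  rwa [comp_timeInv, X.map_id] at this

section Main
variable (hp : InvariantUnderClockIntro p)
include hp

lemma main_aux (N : ℕ) :
    ∀ (A B : TimeObj C) (σ : A ⟶ B), B.E.card ≤ N → Function.Injective σ.toFun →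
      (∀ x, B.d (σ.toFun x) = A.d x) →
      (∀ (r : (ClocksPow C Δ).obj A) (y : X.obj B), p.app B y = σ.toFun ∘ r →
          ∃ x, p.app A x = r ∧ X.map σ x = y) ∧
      (∀ (r : (ClocksPow C Δ).obj A) (x x' : X.obj A), p.app A x = r → p.app A x' = r →
          X.map σ x = X.map σ x' → x = x') := by
  induction N with
  | zero =>
    intro A B σ hcard hinj hd
    have hsurj : Function.Surjective σ.toFun := by
      intro b
      exact absurd b.2
        (Finset.eq_empty_iff_forall_notMem.mp (Finset.card_eq_zero.mp (Nat.le_zero.mp hcard)) b.1)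
    constructor
    · exact fun r y hy => iso_surj σ ⟨hinj, hsurj⟩ hd r y hy
    · exact fun r x x' _ _ h => iso_inj σ ⟨hinj, hsurj⟩ hd h
  | succ N IH =>
    intro A B σ hcard hinj hd
    by_cases hsurj : Function.Surjective σ.toFun
    · constructor
      · exact fun r y hy => iso_surj σ ⟨hinj, hsurj⟩ hd r y hy
      · exact fun r x x' _ _ h => iso_inj σ ⟨hinj, hsurj⟩ hd h
    · -- pick a clock not in the image
      obtain ⟨b, hb⟩ : ∃ b, ∀ x, σ.toFun x ≠ b := by
        simpa [Function.Surjective, eq_comm] using hsurj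
      set l := b.1 with hldef
      have hlB : l ∈ B.E := b.2
      set n₀ := B.d b with hn₀
      set B₀ : TimeObj C := ⟨B.E.erase l, fun x => B.d ⟨x.1, Finset.mem_of_mem_erase x.2⟩⟩
        with hB₀
      have hlB₀ : l ∉ B₀.E := Finset.notMem_erase l B.E
      -- factor σ through B₀
      have hmem : ∀ x, (σ.toFun x).1 ∈ B₀.E := fun x =>
        Finset.mem_erase.mpr ⟨fun hl => hb x (Subtype.ext hl), (σ.toFun x).2⟩
      set σ₀ : A ⟶ B₀ := ⟨fun x => ⟨(σ.toFun x).1, hmem x⟩, fun x => TimeHom.le σ x⟩ with hσ₀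
      have hinj₀ : Function.Injective σ₀.toFun := by
        intro x x' h
        have h1 := congrArg Subtype.val h
        exact hinj (Subtype.ext h1)
      have hd₀ : ∀ x, B₀.d (σ₀.toFun x) = A.d x := fun x => hd x
      -- the comparison iso between B₀.extend l n₀ and B
      have hememMem : ∀ x : {y // y ∈ (B₀.extend l n₀).E}, x.1 ∈ B.E := by
        intro x
        have h1 : x.1 ∈ insert l (B.E.erase l) := x.2
        rwa [Finset.insert_erase hlB] at h1
      set e : B₀.extend l n₀ ⟶ B := ⟨fun x => ⟨x.1, hememMem x⟩, fun x => by
        show B.d _ ≤ (B₀.extend l n₀).d x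
        dsimp only [TimeObj.extend]
        by_cases hx : x.1 ∈ B₀.E
        · rw [dif_pos hx]
        · rw [dif_neg hx]
          have hxl : x.1 = l := by
            rcases Finset.mem_insert.mp x.2 with h1 | h1
            · exact h1
            · exact absurd h1 hx
          have : (⟨x.1, hememMem x⟩ : {y // y ∈ B.E}) = b := Subtype.ext hxl
          rw [this]⟩ with he
      have hebij : Function.Bijective e.toFun := by
        constructor
        · intro x x' h
          have h1 := congrArg Subtype.val h
          exact Subtype.ext h1
        · intro y
          refine ⟨⟨y.1, ?_⟩, rfl⟩
          show y.1 ∈ insert l (B.E.erase l)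
          rw [Finset.insert_erase hlB]; exact y.2
      have hed : ∀ x, B.d (e.toFun x) = (B₀.extend l n₀).d x := by
        intro x
        show B.d _ = (B₀.extend l n₀).d x
        dsimp only [TimeObj.extend]
        by_cases hx : x.1 ∈ B₀.E
        · rw [dif_pos hx]
        · rw [dif_neg hx]
          have hxl : x.1 = l := by
            rcases Finset.mem_insert.mp x.2 with h1 | h1
            · exact h1
            · exact absurd h1 hx
          have : (⟨x.1, hememMem x⟩ : {y // y ∈ B.E}) = b := Subtype.ext hxl
          exact congrArg B.d this
      have hcomp : σ = (σ₀ ≫ inclExtend B₀ l n₀) ≫ e :=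
        TimeHom.ext' (funext fun x => Subtype.ext rfl)
      have hcard₀ : B₀.E.card ≤ N := by
        have h1 : B₀.E.card = B.E.card - 1 := Finset.card_erase_of_mem hlB
        have h2 : 1 ≤ B.E.card := Finset.card_pos.mpr ⟨l, hlB⟩
        omega
      obtain ⟨IHs, IHi⟩ := IH A B₀ σ₀ hcard₀ hinj₀ hd₀
      constructor
      · intro r y hy
        have hy' : p.app B y = e.toFun ∘ ((inclExtend B₀ l n₀).toFun ∘ (σ₀.toFun ∘ r)) := by
          rw [hy, hcomp]; rfl
        obtain ⟨y₁, hy₁p, hy₁⟩ := iso_surj e hebij hed _ y hy'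
        obtain ⟨y₀, hy₀p, hy₀⟩ := key_surj hp hlB₀ n₀ (σ₀.toFun ∘ r) y₁ hy₁p
        obtain ⟨x, hxp, hx⟩ := IHs r y₀ hy₀p
        refine ⟨x, hxp, ?_⟩
        rw [hcomp, X.map_comp, X.map_comp]
        show X.map e (X.map (inclExtend B₀ l n₀) (X.map σ₀ x)) = y
        rw [hx, hy₀, hy₁]
      · intro r x x' hx hx' hmap
        apply IHi r x x' hx hx'
        apply key_inj hp hlB₀ n₀ (σ₀.toFun ∘ r) (X.map σ₀ x) (X.map σ₀ x')
        · have := types_congr_hom (p.naturality σ₀) x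
          rw [types_comp_apply, types_comp_apply] at this
          rw [this, hx]; rfl
        · have := types_congr_hom (p.naturality σ₀) x'
          rw [types_comp_apply, types_comp_apply] at this
          rw [this, hx']; rfl
        · apply iso_inj e hebij hed
          have h1 : X.map ((σ₀ ≫ inclExtend B₀ l n₀) ≫ e) x
              = X.map ((σ₀ ≫ inclExtend B₀ l n₀) ≫ e) x' := by rw [← hcomp]; exact hmap
          rw [X.map_comp, X.map_comp] at h1
          exact h1

lemma main_surj {A B : TimeObj C} (σ : A ⟶ B) (hinj : Function.Injective σ.toFun)
    (hd : ∀ x, B.d (σ.toFun x) = A.d x) (r : (ClocksPow C Δ).obj A) (y : X.obj B)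
    (hy : p.app B y = σ.toFun ∘ r) : ∃ x, p.app A x = r ∧ X.map σ x = y :=
  ((main_aux hp B.E.card) A B σ le_rfl hinj hd).1 r y hy

lemma main_inj {A B : TimeObj C} (σ : A ⟶ B) (hinj : Function.Injective σ.toFun)
    (hd : ∀ x, B.d (σ.toFun x) = A.d x) (r : (ClocksPow C Δ).obj A) (x x' : X.obj A)
    (hx : p.app A x = r) (hx' : p.app A x' = r) (hmap : X.map σ x = X.map σ x') : x = x' :=
  ((main_aux hp B.E.card) A B σ le_rfl hinj hd).2 r x x' hx hx' hmap

end Main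
end Pf3
open CategoryTheory CategoryTheory.Limits Opposite MonoidalCategory Pf Pf2 Pf3

noncomputable section
namespace Pf4
variable {C : Type} [DecidableEq C] [Infinite C] {Δ : Finset C}

lemma incl_inj (B : TimeObj C) (l' : C) (n' : ℕ) :
    Function.Injective (inclExtend B l' n').toFun := fun x x' h => by
  have h1 := congrArg Subtype.val h
  exact Subtype.ext h1

lemma incl_d (B : TimeObj C) (l' : C) (n' : ℕ) :
    ∀ x, (B.extend l' n').d ((inclExtend B l' n').toFun x) = B.d x := fun x => dif_pos x.2

/-- equality of sigma pairs built by restriction from the same element -/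
lemma mk_res_eq (Y : (PObj C Δ)ᵒᵖ ⥤ Type) {B : TimeObj C}
    {ρ ρ' : (ClocksPow C Δ).obj B} (h : ρ = ρ') {v : PObj C Δ}
    (h1 : pobj B ρ ≤ v) (h2 : pobj B ρ' ≤ v) (y : Y.obj (op v)) :
    (⟨ρ, res Y h1 y⟩ : Σ τ : (ClocksPow C Δ).obj B, Y.obj (op (pobj B τ)))
      = ⟨ρ', res Y h2 y⟩ := by cases h; rfl

lemma Gmap_mk_eq (Y : (PObj C Δ)ᵒᵖ ⥤ Type) {B BE : TimeObj C} (σ : B ⟶ BE)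
    (ρ : (ClocksPow C Δ).obj B)
    (s : Σ τ : (ClocksPow C Δ).obj BE, Y.obj (op (pobj BE τ)))
    (hs : s.1 = σ.toFun ∘ ρ) (hle : pobj B ρ ≤ pobj BE s.1) :
    (Gobj Y).map σ ⟨ρ, res Y hle s.2⟩ = s := by
  obtain ⟨s1, s2⟩ := s
  cases hs
  show (⟨σ.toFun ∘ ρ, res Y (pobj_comp_le σ ρ) (res Y hle s2)⟩ :
    Σ τ : (ClocksPow C Δ).obj BE, Y.obj (op (pobj BE τ))) = ⟨σ.toFun ∘ ρ, s2⟩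
  rw [res_res, res_self]

lemma Gmap_inj (Y : (PObj C Δ)ᵒᵖ ⥤ Type) {B BE : TimeObj C} (σ : B ⟶ BE)
    (hinj : Function.Injective σ.toFun) (hd : ∀ x, BE.d (σ.toFun x) = B.d x) :
    Function.Injective ((Gobj Y).map σ) := by
  intro s t h
  obtain ⟨s1, s2⟩ := s; obtain ⟨t1, t2⟩ := t
  have h1 : σ.toFun ∘ s1 = σ.toFun ∘ t1 := congrArg Sigma.fst h
  have h1' : s1 = t1 := funext fun a => hinj (congrFun h1 a)
  cases h1'
  injection h with hh1 hh2
  have h2 : res Y (pobj_comp_le σ s1) s2 = res Y (pobj_comp_le σ s1) t2 := hh2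
  have h3 := congrArg (res Y (pobj_comp_ge σ hinj hd s1)) h2
  rw [res_res, res_res, res_self, res_self] at h3
  rw [h3]

def freshC (B : TimeObj C) : C := (Infinite.exists_notMem_finset B.E).choose
lemma freshC_spec (B : TimeObj C) : freshC B ∉ B.E :=
  (Infinite.exists_notMem_finset B.E).choose_spec

section Inv
variable (Y : (PObj C Δ)ᵒᵖ ⥤ Type) {l : C} {n : ℕ} {Z : TimeObj C ⥤ Type}
  (f : Z ⊗ coyoneda.obj (op (single C l n)) ⟶ Gobj Y)
  (g : Z ⟶ ClocksPow C Δ)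

/-- The value of `f` at the canonical extension of `B` by a fresh clock. -/
def wpair (B : TimeObj C) (z : Z.obj B) : (Gobj Y).obj (B.extend (freshC B) n) :=
  f.app _ (Z.map (inclExtend B (freshC B) n) z, jmap (freshC_spec B))

variable (hsq : f ≫ pG Y = SemiCartesianMonoidalCategory.fst _ _ ≫ g)
include hsq

lemma wpair_fst (B : TimeObj C) (z : Z.obj B) :
    (wpair Y f B z).1 = (inclExtend B (freshC B) n).toFun ∘ (g.app B z) := by
  have h1 : (wpair Y f B z).1
      = g.app _ (Z.map (inclExtend B (freshC B) n) z) :=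
    types_congr_hom (congrFun (congrArg NatTrans.app hsq) (B.extend (freshC B) n))
      (Z.map (inclExtend B (freshC B) n) z, jmap (freshC_spec B))
  have h2 := types_congr_hom (g.naturality (inclExtend B (freshC B) n)) z
  rw [types_comp_apply, types_comp_apply] at h2
  rw [h1, h2]; rfl

def hApp (B : TimeObj C) (z : Z.obj B) : (Gobj Y).obj B :=
  ⟨g.app B z, res Y (by
    rw [wpair_fst Y f g hsq B z]
    exact pobj_comp_ge _ (incl_inj B (freshC B) n) (incl_d B (freshC B) n) _)
    (wpair Y f B z).2⟩

lemma hApp_spec (B : TimeObj C) (z : Z.obj B) :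
    (Gobj Y).map (inclExtend B (freshC B) n) (hApp Y f g hsq B z) = wpair Y f B z :=
  Gmap_mk_eq Y _ _ _ (wpair_fst Y f g hsq B z) _

lemma f_eq_hApp (B : TimeObj C) (z : Z.obj B)
    (v : (coyoneda.obj (op (single C l n))).obj B) :
    f.app B (z, v) = hApp Y f g hsq B z := by
  set κ : B.extend (freshC B) n ⟶ B := combine (𝟙 B) v with hκ
  have hinclκ : inclExtend B (freshC B) n ≫ κ = 𝟙 B := incl_combine _ _
  have hjκ : jmap (freshC_spec B) ≫ κ = v := jmap_combine (freshC_spec B) _ _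
  have hnat := types_congr_hom (f.naturality κ) (Z.map (inclExtend B (freshC B) n) z, jmap (freshC_spec B))
  erw [types_comp_apply, types_comp_apply] at hnat
  have hpair : (Z ⊗ coyoneda.obj (op (single C l n))).map κ
      (Z.map (inclExtend B (freshC B) n) z, jmap (freshC_spec B)) = (z, v) := by
    show (Z.map κ (Z.map (inclExtend B (freshC B) n) z), jmap (freshC_spec B) ≫ κ) = (z, v)
    rw [← types_comp_apply (Z.map _) (Z.map _), ← Z.map_comp, hinclκ, Z.map_id, hjκ]
    rfl
  rw [hpair] at hnat
  rw [hnat]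
  show (Gobj Y).map κ (wpair Y f B z) = hApp Y f g hsq B z
  rw [show (wpair Y f B z : (Gobj Y).obj _) = (Gobj Y).map (inclExtend B (freshC B) n)
    (hApp Y f g hsq B z) from (hApp_spec Y f g hsq B z).symm]
  rw [← types_comp_apply ((Gobj Y).map _) ((Gobj Y).map _), ← (Gobj Y).map_comp, hinclκ,
    (Gobj Y).map_id]
  rfl

lemma hApp_natural (B B₂ : TimeObj C) (σ : B ⟶ B₂) (z : Z.obj B) :
    hApp Y f g hsq B₂ (Z.map σ z) = (Gobj Y).map σ (hApp Y f g hsq B z) := by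
  set l₁ := freshC B
  set l₂ := freshC B₂
  set σ' : B.extend l₁ n ⟶ B₂.extend l₂ n :=
    combine (l := l) (σ ≫ inclExtend B₂ l₂ n) (jmap (l := l) (freshC_spec B₂)) with hσ'
  have h1 : inclExtend B l₁ n ≫ σ' = σ ≫ inclExtend B₂ l₂ n := incl_combine _ _
  have h2 : jmap (freshC_spec B) ≫ σ' = jmap (freshC_spec B₂) := jmap_combine (freshC_spec B) _ _
  -- naturality of f along σ'
  have hnat := types_congr_hom (f.naturality σ') (Z.map (inclExtend B l₁ n) z, jmap (freshC_spec B))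
  erw [types_comp_apply, types_comp_apply] at hnat
  have hpair : (Z ⊗ coyoneda.obj (op (single C l n))).map σ'
      (Z.map (inclExtend B l₁ n) z, jmap (freshC_spec B))
      = (Z.map (inclExtend B₂ l₂ n) (Z.map σ z), jmap (freshC_spec B₂)) := by
    show (Z.map σ' (Z.map (inclExtend B l₁ n) z), jmap (freshC_spec B) ≫ σ') = _
    rw [← types_comp_apply (Z.map _) (Z.map _), ← Z.map_comp, h1, Z.map_comp, h2]
    rfl
  rw [hpair] at hnat
  -- hnat : wpair at B₂ (Z.map σ z) = (Gobj Y).map σ' (wpair at B z)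
  have hw2 : wpair Y f B₂ (Z.map σ z) = (Gobj Y).map σ' (wpair Y f B z) := hnat
  -- now compare via injectivity of map incl₂
  apply Gmap_inj Y (inclExtend B₂ l₂ n) (incl_inj _ _ _) (incl_d _ _ _)
  rw [hApp_spec Y f g hsq B₂ (Z.map σ z), hw2,
    ← types_comp_apply ((Gobj Y).map σ) ((Gobj Y).map _), ← (Gobj Y).map_comp, ← h1,
    (Gobj Y).map_comp, types_comp_apply, hApp_spec Y f g hsq B z]

end Inv

lemma pG_invariant (Y : (PObj C Δ)ᵒᵖ ⥤ Type) : InvariantUnderClockIntro (pG Y) := by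
  intro l n Z f g hsq
  refine ⟨⟨fun B => TypeCat.ofHom fun z => hApp Y f g hsq B z, ?_⟩, ⟨?_, ?_⟩, ?_⟩
  · intro B B₂ σ
    refine ConcreteCategory.hom_ext _ _ fun z => ?_
    exact hApp_natural Y f g hsq B B₂ σ z
  · apply NatTrans.ext; funext B; refine ConcreteCategory.hom_ext _ _ fun q => ?_
    exact (f_eq_hApp Y f g hsq B q.1 q.2).symm
  · apply NatTrans.ext; funext B; refine ConcreteCategory.hom_ext _ _ fun z => ?_
    rfl
  · intro h' ⟨hf', hg'⟩
    apply NatTrans.ext; funext B; refine ConcreteCategory.hom_ext _ _ fun z => ?_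
    -- map incl (h'.app B z) = wpair = map incl (hApp ...)
    apply Gmap_inj Y (inclExtend B (freshC B) n) (incl_inj _ _ _) (incl_d _ _ _)
    have hn := types_congr_hom (h'.naturality (inclExtend B (freshC B) n)) z
    rw [types_comp_apply, types_comp_apply] at hn
    rw [← hn]
    have hf'' : h'.app _ (Z.map (inclExtend B (freshC B) n) z)
        = f.app _ (Z.map (inclExtend B (freshC B) n) z, jmap (freshC_spec B)) :=
      types_congr_hom (congrFun (congrArg NatTrans.app hf') (B.extend (freshC B) n))
        (Z.map (inclExtend B (freshC B) n) z, jmap (freshC_spec B))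
    rw [hf'']
    exact (hApp_spec Y f g hsq B z).symm

end Pf4
open CategoryTheory CategoryTheory.Limits Opposite MonoidalCategory Pf Pf2 Pf3 Pf4

noncomputable section
namespace Pf5
variable {C : Type} [DecidableEq C] {Δ : Finset C}

/-- canonical representative of the class of `a` -/
def rep (u : PObj C Δ) (a : {k // k ∈ Δ}) : {k // k ∈ Δ} :=
  Quotient.out (Quotient.mk u.E a)

lemma rep_rel (u : PObj C Δ) (a : {k // k ∈ Δ}) : u.E.r (rep u a) a :=
  Quotient.exact (Quotient.out_eq (Quotient.mk u.E a))

lemma rep_eq_of_rel (u : PObj C Δ) {a b : {k // k ∈ Δ}} (h : u.E.r a b) :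
    rep u a = rep u b :=
  congrArg Quotient.out (Quotient.sound h)

/-- the chosen quotient time object realizing `u` -/
def Q (u : PObj C Δ) : TimeObj C where
  E := Finset.image (fun a => (rep u a).1) Δ.attach
  d x := u.d ⟨x.1, by
    obtain ⟨a, -, ha⟩ := Finset.mem_image.mp x.2
    exact ha ▸ (rep u a).2⟩

lemma mem_of_memQ (u : PObj C Δ) {c : C} (hc : c ∈ (Q u).E) : c ∈ Δ := by
  obtain ⟨a, -, ha⟩ := Finset.mem_image.mp hc
  exact ha ▸ (rep u a).2

/-- the canonical projection `Δ → Q u` -/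
def π (u : PObj C Δ) : (ClocksPow C Δ).obj (Q u) :=
  fun a => ⟨(rep u a).1, Finset.mem_image.mpr ⟨a, Finset.mem_attach _ a, rfl⟩⟩

lemma π_surj (u : PObj C Δ) (x : {c // c ∈ (Q u).E}) : ∃ a, π u a = x := by
  obtain ⟨c, hc⟩ := x
  obtain ⟨a, -, ha⟩ := Finset.mem_image.mp hc
  exact ⟨a, Subtype.ext ha⟩

lemma Qd_π (u : PObj C Δ) (a : {k // k ∈ Δ}) : (Q u).d (π u a) = u.d a :=
  u.resp _ _ (rep_rel u a)

lemma π_eq_iff (u : PObj C Δ) (a b : {k // k ∈ Δ}) : π u a = π u b ↔ u.E.r a b := by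
  constructor
  · intro h
    have h0 := congrArg Subtype.val h
    have h1 : rep u a = rep u b := Subtype.ext h0
    exact u.E.iseqv.trans (u.E.iseqv.symm (rep_rel u a)) (h1 ▸ rep_rel u b)
  · intro h
    have h0 := congrArg Subtype.val (rep_eq_of_rel u h)
    exact Subtype.ext h0

lemma le_pobjQ (u : PObj C Δ) : pobj (Q u) (π u) ≤ u :=
  ⟨fun a b h => (π_eq_iff u a b).mpr h, fun a => (Qd_π u a).le⟩

lemma ge_pobjQ (u : PObj C Δ) : u ≤ pobj (Q u) (π u) :=
  ⟨fun a b h => (π_eq_iff u a b).mp h, fun a => (Qd_π u a).ge⟩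

/-- the quotient map `Q v ⟶ Q u` for `u ≤ v` -/
def qmor {u v : PObj C Δ} (h : u ≤ v) : Q v ⟶ Q u :=
  ⟨fun x => π u ⟨x.1, mem_of_memQ v x.2⟩, fun x => by
    show (Q u).d (π u ⟨x.1, _⟩) ≤ (Q v).d x
    rw [Qd_π]
    exact h.2 _⟩

lemma qmor_π {u v : PObj C Δ} (h : u ≤ v) : (qmor h).toFun ∘ π v = π u := by
  funext a
  show π u ⟨(π v a).1, _⟩ = π u a
  apply Subtype.ext
  show (rep u ⟨(rep v a).1, _⟩).1 = (rep u a).1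
  exact congrArg Subtype.val (rep_eq_of_rel u (h.1 _ _ (rep_rel v a)))

lemma qmor_π' {u v : PObj C Δ} (h : u ≤ v) (a : {k // k ∈ Δ}) :
    (qmor h).toFun (π v a) = π u a := congrFun (qmor_π h) a

lemma qmor_self {u : PObj C Δ} (h : u ≤ u) : qmor h = 𝟙 (Q u) := by
  apply TimeHom.ext'
  funext x
  obtain ⟨a, rfl⟩ := π_surj u x
  exact congrFun (qmor_π h) a

lemma qmor_comp {u v w : PObj C Δ} (h : u ≤ v) (h' : v ≤ w) (h'' : u ≤ w) :
    qmor h'' = qmor h' ≫ qmor h := by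
  apply TimeHom.ext'
  funext x
  obtain ⟨a, rfl⟩ := π_surj w x
  show (qmor h'').toFun (π w a) = (qmor h).toFun ((qmor h').toFun (π w a))
  rw [qmor_π' h'' a, qmor_π' h' a, qmor_π' h a]

section Fib
variable {X : TimeObj C ⥤ Type} (p : X ⟶ ClocksPow C Δ)

lemma p_nat {B B' : TimeObj C} (σ : B ⟶ B') (x : X.obj B) :
    p.app B' (X.map σ x) = σ.toFun ∘ p.app B x := by
  have := types_congr_hom (p.naturality σ) x
  rwa [types_comp_apply, types_comp_apply] at this

/-- The fiber presheaf on `P(Δ)` of an object over `ClocksPow`. -/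
def Fib : (PObj C Δ)ᵒᵖ ⥤ Type where
  obj u := {x : X.obj (Q u.unop) // p.app _ x = π u.unop}
  map {u v} h := TypeCat.ofHom fun x => ⟨X.map (qmor (leOfHom h.unop)) x.1, by
    rw [p_nat, x.2, qmor_π]⟩
  map_id u := by
    refine ConcreteCategory.hom_ext _ _ fun x => ?_
    apply Subtype.ext
    show X.map (qmor _) x.1 = x.1
    rw [qmor_self (leOfHom (𝟙 u).unop), X.map_id]
    rfl
  map_comp {u v w} h h' := by
    refine ConcreteCategory.hom_ext _ _ fun x => ?_
    apply Subtype.ext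
    show X.map (qmor _) x.1 = X.map (qmor _) (X.map (qmor _) x.1)
    rw [qmor_comp (leOfHom h'.unop) (leOfHom h.unop) (leOfHom (h ≫ h').unop), X.map_comp]
    rfl

def iota (B : TimeObj C) (ρ : (ClocksPow C Δ).obj B) : Q (pobj B ρ) ⟶ B :=
  ⟨fun x => ρ ⟨x.1, mem_of_memQ _ x.2⟩, fun x => le_rfl⟩

lemma iota_π (B : TimeObj C) (ρ : (ClocksPow C Δ).obj B) :
    (iota B ρ).toFun ∘ π (pobj B ρ) = ρ := by
  funext a
  exact rep_rel (pobj B ρ) a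

lemma iota_π' (B : TimeObj C) (ρ : (ClocksPow C Δ).obj B) (a : {k // k ∈ Δ}) :
    (iota B ρ).toFun (π (pobj B ρ) a) = ρ a := congrFun (iota_π B ρ) a

lemma iota_inj (B : TimeObj C) (ρ : (ClocksPow C Δ).obj B) :
    Function.Injective (iota B ρ).toFun := by
  intro x x' h
  obtain ⟨a, rfl⟩ := π_surj _ x
  obtain ⟨a', rfl⟩ := π_surj _ x'
  rw [iota_π' B ρ a, iota_π' B ρ a'] at h
  exact (π_eq_iff _ a a').mpr h

lemma iota_d (B : TimeObj C) (ρ : (ClocksPow C Δ).obj B) :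
    ∀ x, B.d ((iota B ρ).toFun x) = (Q (pobj B ρ)).d x := fun x => rfl

/-- counit components -/
def eps : Gobj (Fib p) ⟶ X where
  app B := TypeCat.ofHom fun s => X.map (iota B s.1) s.2.1
  naturality B B₂ σ := by
    refine ConcreteCategory.hom_ext _ _ fun s => ?_; obtain ⟨ρ, x⟩ := s
    show X.map (iota B₂ (σ.toFun ∘ ρ)) (X.map (qmor _) x.1) = X.map σ (X.map (iota B ρ) x.1)
    erw [← types_comp_apply (X.map _) (X.map (iota B₂ _)), ← X.map_comp,
      ← types_comp_apply (X.map (iota B ρ)) (X.map σ), ← X.map_comp]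
    suffices hc : qmor (pobj_comp_le σ ρ) ≫ iota B₂ (σ.toFun ∘ ρ) = iota B ρ ≫ σ by rw [hc]
    apply TimeHom.ext'; funext x'
    obtain ⟨a, rfl⟩ := π_surj _ x'
    show (iota B₂ (σ.toFun ∘ ρ)).toFun ((qmor _).toFun (π _ a)) = σ.toFun ((iota B ρ).toFun (π _ a))
    rw [qmor_π' (pobj_comp_le σ ρ) a, iota_π' B₂ (σ.toFun ∘ ρ) a, iota_π' B ρ a]
    rfl

lemma eps_p (B : TimeObj C) (s : (Gobj (Fib p)).obj B) :
    p.app B ((eps p).app B s) = s.1 := by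
  show p.app B (X.map (iota B s.1) s.2.1) = s.1
  rw [p_nat, s.2.2]; exact iota_π B s.1

lemma eps_bij (hp : InvariantUnderClockIntro p) (B : TimeObj C) :
    Function.Bijective ((eps p).app B) := by
  constructor
  · intro s t h
    have h1 : s.1 = t.1 := by rw [← eps_p p B s, ← eps_p p B t, h]
    obtain ⟨ρ, x⟩ := s; obtain ⟨ρ', x'⟩ := t
    cases h1
    have h2 : x.1 = x'.1 := by
      refine main_inj hp (iota B ρ) (iota_inj B ρ) (iota_d B ρ) (π (pobj B ρ))
        x.1 x'.1 x.2 x'.2 ?_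
      exact h
    exact congrArg (Sigma.mk ρ) (Subtype.ext h2)
  · intro z
    obtain ⟨x, hx1, hx2⟩ := main_surj hp (iota B (p.app B z)) (iota_inj _ _) (iota_d _ _)
      (π (pobj B (p.app B z))) z (iota_π B (p.app B z)).symm
    exact ⟨⟨p.app B z, ⟨x, hx1⟩⟩, hx2⟩

end Fib
end Pf5
open CategoryTheory CategoryTheory.Limits Opposite MonoidalCategory Pf Pf2 Pf3 Pf4 Pf5

noncomputable section
namespace Pf6
variable {C : Type} [DecidableEq C] [Infinite C] {Δ : Finset C}

def extract (Y' : (PObj C Δ)ᵒᵖ ⥤ Type) {B : TimeObj C}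
    (s : Σ τ : (ClocksPow C Δ).obj B, Y'.obj (op (pobj B τ)))
    (ρ : (ClocksPow C Δ).obj B) (h : s.1 = ρ) : Y'.obj (op (pobj B ρ)) :=
  res Y' ((congrArg (pobj B) h).ge) s.2

lemma extract_congr (Y' : (PObj C Δ)ᵒᵖ ⥤ Type) {B : TimeObj C}
    {s s' : Σ τ : (ClocksPow C Δ).obj B, Y'.obj (op (pobj B τ))} (hss : s = s')
    {ρ : (ClocksPow C Δ).obj B} (h : s.1 = ρ) :
    extract Y' s ρ h = extract Y' s' ρ (hss ▸ h) := by cases hss; rfl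

/-- action of `G` on morphisms (underlying natural transformation) -/
def Gmap {Y Y' : (PObj C Δ)ᵒᵖ ⥤ Type} (β : Y ⟶ Y') : Gobj Y ⟶ Gobj Y' where
  app B := TypeCat.ofHom fun s => ⟨s.1, β.app (op (pobj B s.1)) s.2⟩
  naturality B B₂ σ := by
    refine ConcreteCategory.hom_ext _ _ fun s => ?_; obtain ⟨ρ, y⟩ := s
    exact congrArg (Sigma.mk (σ.toFun ∘ ρ)) (res_natural β (pobj_comp_le σ ρ) y)

/-- The functor from presheaves on `P(Δ)` to the full subcategory. -/
def G : ((PObj C Δ)ᵒᵖ ⥤ Type) ⥤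
    (ObjectProperty.FullSubcategory fun X : Over (ClocksPow C Δ) => InvariantUnderClockIntro X.hom) where
  obj Y := ⟨Over.mk (pG Y), pG_invariant Y⟩
  map {Y Y'} β := ObjectProperty.homMk (Over.homMk (Gmap β) (by apply NatTrans.ext; funext B; rfl))
  map_id Y := by
    apply ObjectProperty.hom_ext
    apply Over.OverMorphism.ext
    apply NatTrans.ext; funext B; refine ConcreteCategory.hom_ext _ _ fun s => ?_; rfl
  map_comp {Y Y' Y''} β β' := by
    apply ObjectProperty.hom_ext
    apply Over.OverMorphism.ext
    apply NatTrans.ext; funext B; refine ConcreteCategory.hom_ext _ _ fun s => ?_; rfl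

section FullFaithful
variable {Y Y' : (PObj C Δ)ᵒᵖ ⥤ Type}

lemma alpha_fst (α : G.obj Y ⟶ G.obj Y') {B : TimeObj C} (s : (Gobj Y).obj B) :
    (α.hom.left.app B s).1 = s.1 :=
  types_congr_hom (congrFun (congrArg NatTrans.app (Over.w α.hom)) B) s

/-- canonical test element -/
def tele (Y : (PObj C Δ)ᵒᵖ ⥤ Type) (u : PObj C Δ) (y : Y.obj (op u)) : (Gobj Y).obj (Q u) :=
  ⟨π u, res Y (le_pobjQ u) y⟩

lemma Gmk_iota (Y : (PObj C Δ)ᵒᵖ ⥤ Type) (B : TimeObj C) (ρ : (ClocksPow C Δ).obj B)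
    (y' : Y.obj (op (pobj B ρ))) :
    (Gobj Y).map (iota B ρ) (tele Y (pobj B ρ) y') = ⟨ρ, y'⟩ := by
  show (⟨(iota B ρ).toFun ∘ π (pobj B ρ),
    res Y (pobj_comp_le _ _) (res Y (le_pobjQ (pobj B ρ)) y')⟩ :
      Σ τ : (ClocksPow C Δ).obj B, Y.obj (op (pobj B τ))) = ⟨ρ, y'⟩
  rw [res_res]
  have h1 := mk_res_eq Y (iota_π B ρ) ((pobj_comp_le (iota B ρ) (π (pobj B ρ))).trans
    (le_pobjQ (pobj B ρ))) (le_refl (pobj B ρ)) y'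
  rw [h1, res_self]

/-- extraction of `β` from `α` -/
def βof (α : G.obj Y ⟶ G.obj Y') (u : (PObj C Δ)ᵒᵖ) (y : Y.obj u) : Y'.obj u :=
  res Y' (ge_pobjQ u.unop)
    (extract Y' (α.hom.left.app (Q u.unop) (tele Y u.unop y)) (π u.unop)
      (by rw [alpha_fst]; rfl))

lemma tele_nat {u v : PObj C Δ} (h : v ≤ u) (y : Y.obj (op u)) :
    tele Y v (res Y h y) = (Gobj Y).map (qmor h) (tele Y u y) := by
  have h1 : tele Y v (res Y h y) = ⟨π v, res Y ((le_pobjQ v).trans h) y⟩ := by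
    show (⟨π v, res Y (le_pobjQ v) (res Y h y)⟩ :
        Σ τ : (ClocksPow C Δ).obj (Q v), Y.obj (op (pobj (Q v) τ))) = _
    rw [res_res]; rfl
  have h2 : (Gobj Y).map (qmor h) (tele Y u y)
      = ⟨(qmor h).toFun ∘ π u, res Y ((pobj_comp_le (qmor h) (π u)).trans (le_pobjQ u)) y⟩ := by
    show (⟨(qmor h).toFun ∘ π u, res Y (pobj_comp_le _ _) (res Y (le_pobjQ u) y)⟩ :
        Σ τ : (ClocksPow C Δ).obj (Q v), Y.obj (op (pobj (Q v) τ))) = _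
    rw [res_res]; rfl
  rw [h1, h2]
  exact mk_res_eq Y (qmor_π h).symm _ _ y

lemma extract_map_qmor {u v : PObj C Δ} (h : v ≤ u)
    (su : Σ τ : (ClocksPow C Δ).obj (Q u), Y'.obj (op (pobj (Q u) τ)))
    (hs1 : su.1 = π u) (P1 : ((Gobj Y').map (qmor h) su).1 = π v) :
    res Y' (ge_pobjQ v) (extract Y' ((Gobj Y').map (qmor h) su) (π v) P1)
      = res Y' h (res Y' (ge_pobjQ u) (extract Y' su (π u) hs1)) := by
  obtain ⟨s1, s2⟩ := su; cases hs1
  unfold extract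
  show res Y' _ (res Y' _ (res Y' _ s2)) = res Y' _ (res Y' _ (res Y' _ s2))
  rw [res_res, res_res, res_res]; erw [res_res]

lemma βof_nat (α : G.obj Y ⟶ G.obj Y') {u v : PObj C Δ} (h : v ≤ u) (y : Y.obj (op u)) :
    βof α (op v) (res Y h y) = res Y' h (βof α (op u) y) := by
  have hnat : α.hom.left.app (Q v) ((Gobj Y).map (qmor h) (tele Y u y))
      = (Gobj Y').map (qmor h) (α.hom.left.app (Q u) (tele Y u y)) :=
    types_congr_hom (α.hom.left.naturality (qmor h)) (tele Y u y)
  have hst : α.hom.left.app (Q v) (tele Y v (res Y h y))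
      = (Gobj Y').map (qmor h) (α.hom.left.app (Q u) (tele Y u y)) := by
    rw [tele_nat h y]; exact hnat
  unfold βof
  rw [extract_congr Y' hst]
  have hs1 : (α.hom.left.app (Q u) (tele Y u y)).1 = π u := by rw [alpha_fst]; rfl
  exact extract_map_qmor h _ hs1 _

def βnat (α : G.obj Y ⟶ G.obj Y') : Y ⟶ Y' where
  app u := TypeCat.ofHom (βof α u)
  naturality u v m := by
    refine ConcreteCategory.hom_ext _ _ fun y => ?_
    exact βof_nat α (leOfHom m.unop) y

lemma mk_βof_iota (B : TimeObj C) (ρ : (ClocksPow C Δ).obj B)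
    (su : Σ τ : (ClocksPow C Δ).obj (Q (pobj B ρ)), Y'.obj (op (pobj (Q (pobj B ρ)) τ)))
    (hs1 : su.1 = π (pobj B ρ)) :
    (⟨ρ, res Y' (ge_pobjQ (pobj B ρ)) (extract Y' su (π (pobj B ρ)) hs1)⟩ :
        Σ τ : (ClocksPow C Δ).obj B, Y'.obj (op (pobj B τ)))
      = (Gobj Y').map (iota B ρ) su := by
  obtain ⟨s1, s2⟩ := su; cases hs1
  show (⟨ρ, res Y' _ (res Y' _ s2)⟩ : Σ τ : (ClocksPow C Δ).obj B, Y'.obj (op (pobj B τ)))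
    = ⟨(iota B ρ).toFun ∘ π _, res Y' (pobj_comp_le _ _) s2⟩
  rw [res_res]
  exact mk_res_eq Y' (iota_π B ρ).symm _ _ s2

lemma G_map_βnat (α : G.obj Y ⟶ G.obj Y') : G.map (βnat α) = α := by
  apply ObjectProperty.hom_ext
  apply Over.OverMorphism.ext
  apply NatTrans.ext; funext B; refine ConcreteCategory.hom_ext _ _ fun s => ?_
  obtain ⟨ρ, y'⟩ := s
  have hA : α.hom.left.app B ⟨ρ, y'⟩
      = (Gobj Y').map (iota B ρ) (α.hom.left.app (Q (pobj B ρ)) (tele Y (pobj B ρ) y')) := by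
    conv_lhs => rw [← Gmk_iota Y B ρ y']
    exact types_congr_hom (α.hom.left.naturality (iota B ρ)) (tele Y (pobj B ρ) y')
  show (⟨ρ, βof α (op (pobj B ρ)) y'⟩ :
      Σ τ : (ClocksPow C Δ).obj B, Y'.obj (op (pobj B τ))) = α.hom.left.app B ⟨ρ, y'⟩
  rw [hA]
  unfold βof
  exact mk_βof_iota B ρ _ _

lemma G_faithful_aux {β β' : Y ⟶ Y'} (h : G.map β = G.map β') : β = β' := by
  apply NatTrans.ext; funext u; refine ConcreteCategory.hom_ext _ _ fun y => ?_
  have h1 : (Gmap β).app (Q u.unop) (tele Y u.unop y)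
      = (Gmap β').app (Q u.unop) (tele Y u.unop y) :=
    types_congr_hom (congrArg (fun (τ : G.obj Y ⟶ G.obj Y') => τ.hom.left.app (Q u.unop)) h)
      (tele Y u.unop y)
  have h1' : (⟨π u.unop, β.app (op (pobj (Q u.unop) (π u.unop)))
        (res Y (le_pobjQ u.unop) y)⟩ :
      Σ τ : (ClocksPow C Δ).obj (Q u.unop), Y'.obj (op (pobj (Q u.unop) τ)))
      = ⟨π u.unop, β'.app (op (pobj (Q u.unop) (π u.unop))) (res Y (le_pobjQ u.unop) y)⟩ := h1
  injection h1' with hf hsnd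
  have h2 : res Y' (le_pobjQ u.unop) (β.app (op u.unop) y)
      = res Y' (le_pobjQ u.unop) (β'.app (op u.unop) y) := by
    rw [← res_natural, ← res_natural]; exact hsnd
  have h3 := congrArg (res Y' (ge_pobjQ u.unop)) h2
  rw [res_res, res_res, res_self, res_self] at h3
  exact h3

end FullFaithful

instance G_full : (G (C := C) (Δ := Δ)).Full where
  map_surjective α := ⟨βnat α, G_map_βnat α⟩

instance G_faithful : (G (C := C) (Δ := Δ)).Faithful where
  map_injective h := G_faithful_aux h

instance G_essSurj : (G (C := C) (Δ := Δ)).EssSurj where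
  mem_essImage T := by
    refine ⟨Fib T.obj.hom, ⟨?_⟩⟩
    have hp : InvariantUnderClockIntro T.obj.hom := T.property
    let e_nat : Gobj (Fib T.obj.hom) ≅ T.obj.left :=
      NatIso.ofComponents
        (fun B => (Equiv.ofBijective _ (eps_bij T.obj.hom hp B)).toIso)
        (fun {B B₂} σ => (eps T.obj.hom).naturality σ)
    let over_iso : (G.obj (Fib T.obj.hom)).obj ≅ T.obj :=
      Over.isoMk e_nat
        (by
          apply NatTrans.ext; funext B; refine ConcreteCategory.hom_ext _ _ fun s => ?_
          show T.obj.hom.app B ((eps T.obj.hom).app B s) = s.1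
          exact eps_p T.obj.hom B s)
    exact ObjectProperty.isoMk _ over_iso

end Pf6



/-- The full subcategory of `Set^𝕋/𝒞^Δ` on objects whose structure map is invariant
under clock introduction is equivalent to `GR(Δ)`, the category of presheaves on the
poset `P(Δ)`. -/
theorem statement_16 (C : Type) [Countable C] [Infinite C] (Δ : Finset C) :
    Nonempty
      ((ObjectProperty.FullSubcategory fun X : Over (ClocksPow C Δ) => InvariantUnderClockIntro X.hom)
        ≌ ((PObj C Δ)ᵒᵖ ⥤ Type)) := by
  letI : DecidableEq C := Classical.decEq C
  haveI : (Pf6.G (C := C) (Δ := Δ)).IsEquivalence := {}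
  exact ⟨(Pf6.G (C := C) (Δ := Δ)).asEquivalence.symm⟩
end
end
end
end
end
end
end

section
/- Let Δ be a finite set of clocks. Let R(Δ) be the category whose objects are triples (ℰ, σ, δ) with ℰ a finite subset of the set of clocks, σ : Δ → ℰ a function and δ : ℰ → ℕ, and whose morphisms (ℰ, σ, δ) → (ℰ', σ', δ') are functions τ : ℰ → ℰ' with τ ∘ σ = σ' and δ' ∘ τ ≤ δ pointwise, and let S(Δ) be the full subcategory of R(Δ) on those objects (ℰ, σ, δ) for which σ is surjective. Then the poset P(Δ) is equivalent, as a category, to the opposite category S(Δ)ᵒᵖ. -/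
open CategoryTheory

/-- An object of `R(Δ)`: a finite set of clocks `ℰ`, a function `σ : Δ → ℰ` and a
function `δ : ℰ → ℕ`. -/
structure RObj (C : Type) (Δ : Finset C) where
  E : Finset C
  σ : {k // k ∈ Δ} → {x // x ∈ E}
  d : {x // x ∈ E} → ℕ

/-- A morphism of `R(Δ)`: a function `τ : ℰ → ℰ'` with `τ ∘ σ = σ'` and
`δ' ∘ τ ≤ δ` pointwise. -/
structure RHom {C : Type} {Δ : Finset C} (A B : RObj C Δ) where
  toFun : {x // x ∈ A.E} → {x // x ∈ B.E}
  comm : ∀ k, toFun (A.σ k) = B.σ k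
  le : ∀ x, B.d (toFun x) ≤ A.d x

theorem RHom.ext' {C : Type} {Δ : Finset C} {A B : RObj C Δ} {f g : RHom A B}
    (h : f.toFun = g.toFun) : f = g := by
  cases f; cases g; cases h; rfl

/-- The category `R(Δ)`. -/
instance RCat (C : Type) (Δ : Finset C) : Category (RObj C Δ) where
  Hom := RHom
  id _ := ⟨fun x => x, fun _ => rfl, fun _ => le_rfl⟩
  comp f g := ⟨RHom.toFun g ∘ RHom.toFun f,
    fun k => by dsimp; rw [RHom.comm f k, RHom.comm g k],
    fun x => le_trans (RHom.le g _) (RHom.le f _)⟩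
  id_comp _ := rfl
  comp_id _ := rfl
  assoc _ _ _ := rfl

-- auxiliary
namespace StmtAux
attribute [local instance] Classical.propDecidable
variable {C : Type} {Δ : Finset C}

abbrev SCat (C : Type) (Δ : Finset C) :=
  ObjectProperty.FullSubcategory fun A : RObj C Δ => Function.Surjective A.σ

lemma rhom_subsingleton {A B : RObj C Δ} (hA : Function.Surjective A.σ) :
    Subsingleton (RHom A B) :=
  ⟨fun f g => RHom.ext' (funext fun x => by
    obtain ⟨k, rfl⟩ := hA x; rw [f.comm, g.comm])⟩

instance {A B : SCat C Δ} : Subsingleton (A ⟶ B) :=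
  ⟨fun f g => InducedCategory.hom_ext ((rhom_subsingleton A.property).elim _ _)⟩
instance {A B : (SCat C Δ)ᵒᵖ} : Subsingleton (A ⟶ B) :=
  ⟨fun f g => Quiver.Hom.unop_inj (Subsingleton.elim _ _)⟩

noncomputable def rep (x : PObj C Δ) (k : {k // k ∈ Δ}) : {k // k ∈ Δ} :=
  (Quotient.mk x.E k).out

lemma rep_rel (x : PObj C Δ) (k : {k // k ∈ Δ}) : x.E.r (rep x k) k :=
  Quotient.mk_out k

lemma rep_eq_iff (x : PObj C Δ) {a b : {k // k ∈ Δ}} :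
    rep x a = rep x b ↔ x.E.r a b := by
  constructor
  · intro h
    exact x.E.trans (x.E.symm (rep_rel x a)) (h ▸ rep_rel x b)
  · intro h
    unfold rep
    congr 1
    exact Quotient.sound h

noncomputable def FE (x : PObj C Δ) : Finset C :=
  Δ.attach.image fun k => (rep x k).val

lemma FE_subset (x : PObj C Δ) {c : C} (h : c ∈ FE x) : c ∈ Δ := by
  obtain ⟨k, -, rfl⟩ := Finset.mem_image.mp h
  exact (rep x k).prop

noncomputable def Fobj (x : PObj C Δ) : RObj C Δ where
  E := FE x
  σ k := ⟨(rep x k).val, Finset.mem_image_of_mem _ (Finset.mem_attach _ _)⟩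
  d e := x.d ⟨e.val, FE_subset x e.prop⟩

lemma Fobj_surj (x : PObj C Δ) : Function.Surjective (Fobj x).σ := by
  rintro ⟨e, he⟩
  obtain ⟨k, -, hk⟩ := Finset.mem_image.mp he
  exact ⟨k, Subtype.ext hk⟩

lemma sigma_eq_iff (x : PObj C Δ) {a b : {k // k ∈ Δ}} :
    (Fobj x).σ a = (Fobj x).σ b ↔ x.E.r a b := by
  rw [← rep_eq_iff x (a := a) (b := b)]
  constructor
  · intro h
    have h' : ((Fobj x).σ a).val = ((Fobj x).σ b).val := congrArg Subtype.val h
    exact Subtype.ext h'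
  · intro h
    have h' : (rep x a).val = (rep x b).val := congrArg Subtype.val h
    exact Subtype.ext h'

lemma d_sigma (x : PObj C Δ) (k : {k // k ∈ Δ}) :
    (Fobj x).d ((Fobj x).σ k) = x.d k :=
  x.resp _ _ (rep_rel x k)

noncomputable def Ffun : PObj C Δ ⥤ (SCat C Δ)ᵒᵖ where
  obj x := Opposite.op ⟨Fobj x, Fobj_surj x⟩
  map {x y} f := Quiver.Hom.op
    (ObjectProperty.homMk (show RHom (Fobj y) (Fobj x) from
      { toFun := fun e => (Fobj x).σ ⟨e.val, FE_subset y e.prop⟩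
        comm := fun k =>
          show (Fobj x).σ (rep y k) = (Fobj x).σ k from
            (sigma_eq_iff x).mpr ((leOfHom f).1 _ _ (rep_rel y k))
        le := fun e => by
          rw [d_sigma x]
          exact (leOfHom f).2 ⟨e.val, FE_subset y e.prop⟩ }))
  map_id _ := Subsingleton.elim _ _
  map_comp _ _ := Subsingleton.elim _ _

def Gobj (A : RObj C Δ) : PObj C Δ where
  E := ⟨fun a b => A.σ a = A.σ b, ⟨fun _ => rfl, Eq.symm, Eq.trans⟩⟩
  d k := A.d (A.σ k)
  resp a b h := by dsimp only at h ⊢; rw [h]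

def Gfun : (SCat C Δ)ᵒᵖ ⥤ PObj C Δ where
  obj A := Gobj A.unop.obj
  map {A B} f := homOfLE (by
    have τ : RHom B.unop.obj A.unop.obj := f.unop.hom
    refine ⟨fun a b h => ?_, fun k => ?_⟩
    · show A.unop.obj.σ a = A.unop.obj.σ b
      have h' : B.unop.obj.σ a = B.unop.obj.σ b := h
      rw [← τ.comm a, ← τ.comm b, h']
    · show A.unop.obj.d (A.unop.obj.σ k) ≤ B.unop.obj.d (B.unop.obj.σ k)
      rw [← τ.comm k]
      exact τ.le _)
  map_id _ := Subsingleton.elim _ _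
  map_comp _ _ := Subsingleton.elim _ _


noncomputable def unitIso : 𝟭 (PObj C Δ) ≅ Ffun ⋙ (Gfun (C := C) (Δ := Δ)) :=
  NatIso.ofComponents
    (fun x =>
      { hom := homOfLE (by
          refine ⟨fun a b h => ?_, fun k => ?_⟩
          · exact (sigma_eq_iff x).mp h
          · exact le_of_eq (d_sigma x k).symm)
        inv := homOfLE (by
          refine ⟨fun a b h => ?_, fun k => ?_⟩
          · exact (sigma_eq_iff x).mpr h
          · exact le_of_eq (d_sigma x k))
        hom_inv_id := Subsingleton.elim _ _
        inv_hom_id := Subsingleton.elim _ _ })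
    (fun _ => Subsingleton.elim _ _)

noncomputable def counitHom (A : (SCat C Δ)ᵒᵖ) :
    RHom A.unop.obj (Fobj (Gobj A.unop.obj)) where
  toFun e := (Fobj (Gobj A.unop.obj)).σ (Function.surjInv A.unop.property e)
  comm k := by
    apply (sigma_eq_iff (Gobj A.unop.obj)).mpr
    show A.unop.obj.σ _ = A.unop.obj.σ k
    exact Function.surjInv_eq A.unop.property (A.unop.obj.σ k)
  le e := by
    rw [d_sigma (Gobj A.unop.obj)]
    show A.unop.obj.d (A.unop.obj.σ _) ≤ A.unop.obj.d e
    rw [Function.surjInv_eq A.unop.property e]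

noncomputable def counitInv (A : (SCat C Δ)ᵒᵖ) :
    RHom (Fobj (Gobj A.unop.obj)) A.unop.obj where
  toFun e := A.unop.obj.σ ⟨e.val, FE_subset (Gobj A.unop.obj) e.prop⟩
  comm k :=
    show A.unop.obj.σ (rep (Gobj A.unop.obj) k) = A.unop.obj.σ k from
      rep_rel (Gobj A.unop.obj) k
  le e := le_of_eq rfl

noncomputable def counitIso :
    (Gfun (C := C) (Δ := Δ)) ⋙ Ffun ≅ 𝟭 (SCat C Δ)ᵒᵖ :=
  NatIso.ofComponents
    (fun A =>
      (show A.unop ≅ (⟨Fobj (Gobj A.unop.obj), Fobj_surj _⟩ : SCat C Δ) from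
        { hom := ObjectProperty.homMk (counitHom A)
          inv := ObjectProperty.homMk (counitInv A)
          hom_inv_id := Subsingleton.elim _ _
          inv_hom_id := Subsingleton.elim _ _ }).op)
    (fun _ => Subsingleton.elim _ _)

noncomputable def theEquiv : PObj C Δ ≌ (SCat C Δ)ᵒᵖ :=
  CategoryTheory.Equivalence.mk Ffun Gfun unitIso counitIso

end StmtAux

/-- The poset `P(Δ)` is equivalent, as a category, to the opposite of `S(Δ)`, the
full subcategory of `R(Δ)` on objects whose map `σ : Δ → ℰ` is surjective. -/
theorem statement_17 (C : Type) [Countable C] [Infinite C] (Δ : Finset C) :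
    Nonempty (PObj C Δ ≌
      (ObjectProperty.FullSubcategory fun A : RObj C Δ => Function.Surjective A.σ)ᵒᵖ) := by
  exact ⟨StmtAux.theEquiv⟩
end
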